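/- Let {X_k}_{k≥0} be a sequence with X₀ = 0 such that, for every k ≥ 0, X_{k+1} is a minimal nonnegative solution of X = Σ_{ℓ=−1}^q A_ℓ(X_k) X^{ℓ+1}, and let G be the minimal nonnegative solution of X = Σ_{i=0}^∞ A_{i−1} Xⁱ. Set ε_k = (G − X_k)·1. Then for every k ≥ 0 one has M ε_{k+1} ≤ N ε_k entrywise, where M = I − F, F = Σ_{ℓ=0}^q A_ℓ(G) Σ_{j=0}^ℓ G^j, and N = Σ_{ℓ=−1}^q Σ_{i=1}^∞ A_{ℓ,i} Σ_{j=0}^{i−1} G^j. -/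

import Mathlib

open Matrix

/-- Entrywise order on square real matrices. -/
def Mle {m : ℕ} (X Y : Matrix (Fin m) (Fin m) ℝ) : Prop := ∀ i j, X i j ≤ Y i j

/-- `G` is the minimal nonnegative solution of `X = ∑_{i=0}^∞ A_{i-1} Xⁱ`. -/
def IsMinSol {m : ℕ} (A : ℕ → Matrix (Fin m) (Fin m) ℝ)
    (G : Matrix (Fin m) (Fin m) ℝ) : Prop :=
  Mle 0 G ∧ Summable (fun i => A i * G ^ i) ∧ G = ∑' i, A i * G ^ i ∧
    ∀ Y, Mle 0 Y → Summable (fun i => A i * Y ^ i) → Y = ∑' i, A i * Y ^ i → Mle G Y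

/-- Minimal nonnegative solution of `Z = ∑_{ℓ=-1}^q C_ℓ Z^{ℓ+1}` (shifted index). -/
def IsMinPolySol {m : ℕ} (p : ℕ) (C : ℕ → Matrix (Fin m) (Fin m) ℝ)
    (Z : Matrix (Fin m) (Fin m) ℝ) : Prop :=
  Mle 0 Z ∧ Z = ∑ ℓ ∈ Finset.range (p + 1), C ℓ * Z ^ ℓ ∧
    ∀ Y, Mle 0 Y → Y = ∑ ℓ ∈ Finset.range (p + 1), C ℓ * Y ^ ℓ → Mle Z Y

open Filter

section helpers
variable {m : ℕ}
local notation "M" => Matrix (Fin m) (Fin m) ℝ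

lemma Mle.trans {X Y Z : M} (h1 : Mle X Y) (h2 : Mle Y Z) : Mle X Z :=
  fun i j => (h1 i j).trans (h2 i j)

lemma mle_mul {A B X Y : M} (hA : Mle 0 A) (hAB : Mle A B) (hX : Mle 0 X) (hXY : Mle X Y) :
    Mle (A * X) (B * Y) := by
  intro i j
  simp only [Matrix.mul_apply]
  apply Finset.sum_le_sum
  intro k _
  have h0A := hA i k
  have h0X := hX k j
  simp only [Matrix.zero_apply] at h0A h0X
  exact mul_le_mul (hAB i k) (hXY k j) h0X (le_trans h0A (hAB i k))

lemma mle_mul_nonneg {X Y : M} (hX : Mle 0 X) (hY : Mle 0 Y) : Mle 0 (X * Y) := by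
  have := mle_mul (A := (0:M)) (B := X) (X := (0:M)) (Y := Y) (fun i j => le_refl _)
    hX (fun i j => le_refl _) hY
  simpa using this

lemma mle_one_nonneg : Mle 0 (1 : M) := by
  intro i j
  by_cases hij : i = j <;> simp [Matrix.one_apply, hij]

lemma mle_pow_nonneg {X : M} (hX : Mle 0 X) (n : ℕ) : Mle 0 (X ^ n) := by
  induction n with
  | zero => simpa [pow_zero] using mle_one_nonneg
  | succ k ihk => rw [pow_succ]; exact mle_mul_nonneg ihk hX

lemma mle_pow {X Y : M} (hX : Mle 0 X) (hXY : Mle X Y) (n : ℕ) : Mle (X ^ n) (Y ^ n) := by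
  induction n with
  | zero => simp [pow_zero]; exact fun i j => le_refl _
  | succ n ih => rw [pow_succ, pow_succ]; exact mle_mul (mle_pow_nonneg hX n) ih hX hXY

lemma mle_sum {s : Finset ℕ} {F H : ℕ → M} (h : ∀ n ∈ s, Mle (F n) (H n)) :
    Mle (∑ n ∈ s, F n) (∑ n ∈ s, H n) := by
  intro i j
  simp only [Matrix.sum_apply]
  exact Finset.sum_le_sum fun n hn => h n hn i j

lemma mle_sum_nonneg {s : Finset ℕ} {F : ℕ → M} (h : ∀ n ∈ s, Mle 0 (F n)) :
    Mle 0 (∑ n ∈ s, F n) := by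
  have := mle_sum (s := s) (F := fun _ => (0:M)) (H := F) (fun n hn => h n hn)
  simpa using this

lemma summable_matrix_iff {F : ℕ → M} :
    Summable F ↔ ∀ i j, Summable (fun n => F n i j) := by
  exact Pi.summable.trans (forall_congr' fun i => Pi.summable)

lemma tsum_entry {F : ℕ → M} (hF : Summable F) (i j : Fin m) :
    (∑' n, F n) i j = ∑' n, F n i j := by
  have h1 : (∑' n, F n) i = ∑' n, F n i := tsum_apply hF
  rw [h1]
  exact tsum_apply (Pi.summable.mp hF i)

lemma summable_of_mle {F H : ℕ → M} (h0 : ∀ n, Mle 0 (F n)) (h : ∀ n, Mle (F n) (H n))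
    (hH : Summable H) : Summable F := by
  rw [summable_matrix_iff] at hH ⊢
  intro i j
  exact Summable.of_nonneg_of_le (fun n => by simpa using h0 n i j) (fun n => h n i j) (hH i j)

lemma mle_tsum {F H : ℕ → M} (h : ∀ n, Mle (F n) (H n)) (hF : Summable F) (hH : Summable H) :
    Mle (∑' n, F n) (∑' n, H n) := by
  intro i j
  rw [tsum_entry hF, tsum_entry hH]
  exact Summable.tsum_le_tsum (fun n => h n i j) (summable_matrix_iff.mp hF i j)
    (summable_matrix_iff.mp hH i j)

lemma mle_tsum_nonneg {F : ℕ → M} (h : ∀ n, Mle 0 (F n)) (hF : Summable F) :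
    Mle 0 (∑' n, F n) := by
  have := mle_tsum (F := fun _ => (0:M)) (H := F) h (summable_zero) hF
  simpa using this



lemma mulVec_entry (A : M) (v : Fin m → ℝ) (i : Fin m) :
    (A *ᵥ v) i = ∑ j, A i j * v j := by
  simp [Matrix.mulVec, dotProduct]

lemma mulVec_mono_vec {A : M} {v w : Fin m → ℝ} (hA : Mle 0 A) (hvw : v ≤ w) :
    A *ᵥ v ≤ A *ᵥ w := by
  intro i
  rw [mulVec_entry, mulVec_entry]
  exact Finset.sum_le_sum fun j _ => mul_le_mul_of_nonneg_left (hvw j) (by simpa using hA i j)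

lemma mulVec_mono_mat {A B : M} {v : Fin m → ℝ} (hAB : Mle A B) (hv : 0 ≤ v) :
    A *ᵥ v ≤ B *ᵥ v := by
  intro i
  rw [mulVec_entry, mulVec_entry]
  exact Finset.sum_le_sum fun j _ => mul_le_mul_of_nonneg_right (hAB i j) (hv j)

lemma mulVec_nonneg {A : M} {v : Fin m → ℝ} (hA : Mle 0 A) (hv : 0 ≤ v) :
    0 ≤ A *ᵥ v := by
  have h := mulVec_mono_mat (A := (0:M)) (B := A) hA hv
  simpa [Matrix.zero_mulVec] using h

lemma sum_mulVec (s : Finset ℕ) (F : ℕ → M) (v : Fin m → ℝ) :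
    (∑ n ∈ s, F n) *ᵥ v = ∑ n ∈ s, F n *ᵥ v := by
  ext i
  rw [mulVec_entry]
  simp only [Finset.sum_apply, mulVec_entry, Matrix.sum_apply, Finset.sum_mul]
  exact Finset.sum_comm

lemma summable_matrix_iff' {F : ℕ → M} :
    Summable F ↔ ∀ i j, Summable (fun n => F n i j) := by
  exact Pi.summable.trans (forall_congr' fun i => Pi.summable)

lemma summable_mulVec_entry {F : ℕ → M} (hF : Summable F) (v : Fin m → ℝ) (i : Fin m) :
    Summable (fun n => (F n *ᵥ v) i) := by
  simp only [mulVec_entry]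
  exact summable_sum fun j _ => Summable.mul_right _ (summable_matrix_iff'.mp hF i j)

lemma tsum_mulVec {F : ℕ → M} (hF : Summable F) (v : Fin m → ℝ) (i : Fin m) :
    ((∑' n, F n) *ᵥ v) i = ∑' n, (F n *ᵥ v) i := by
  rw [mulVec_entry]
  have h1 : ∀ j, (∑' n, F n) i j = ∑' n, F n i j := by
    intro j
    have h2 : (∑' n, F n) i = ∑' n, F n i := tsum_apply hF
    rw [h2]; exact tsum_apply (Pi.summable.mp hF i)
  calc ∑ j, (∑' n, F n) i j * v j = ∑ j, ∑' n, F n i j * v j := by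
        refine Finset.sum_congr rfl fun j _ => ?_
        rw [h1 j, Summable.tsum_mul_right _ (summable_matrix_iff'.mp hF i j)]
    _ = ∑' n, ∑ j, F n i j * v j :=
        (Summable.tsum_finsetSum fun j _ => Summable.mul_right _ (summable_matrix_iff'.mp hF i j)).symm
    _ = ∑' n, (F n *ᵥ v) i := by simp only [mulVec_entry]


lemma mle_of_tendsto {g : ℕ → M} {L B : M} (hg : Filter.Tendsto g atTop (nhds L))
    (hB : ∀ n, Mle (g n) B) : Mle L B := by
  intro i j
  have h1 : Filter.Tendsto (fun n => g n i j) atTop (nhds (L i j)) :=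
    tendsto_pi_nhds.mp (tendsto_pi_nhds.mp hg i) j
  exact le_of_tendsto h1 (Filter.Eventually.of_forall fun n => hB n i j)

lemma mle_of_tendsto' {g : ℕ → M} {L B : M} (hg : Filter.Tendsto g atTop (nhds L))
    (hB : ∀ n, Mle B (g n)) : Mle B L := by
  intro i j
  have h1 : Filter.Tendsto (fun n => g n i j) atTop (nhds (L i j)) :=
    tendsto_pi_nhds.mp (tendsto_pi_nhds.mp hg i) j
  exact ge_of_tendsto h1 (Filter.Eventually.of_forall fun n => hB n i j)

/-- Existence of a fixed point below `G` for a monotone map that maps `[0,G]` into itself,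
together with a property preserved along the iteration. -/
lemma exists_fixed (G : M) (f : M → M) (P : M → Prop)
    (hmono : ∀ X Y, Mle 0 X → Mle X Y → Mle Y G → Mle (f X) (f Y))
    (h0 : ∀ X, Mle 0 X → Mle X G → Mle 0 (f X))
    (hfG : Mle (f G) G)
    (hG0 : Mle 0 G)
    (hcont : ∀ (g : ℕ → M) (L : M), (∀ n, Mle 0 (g n)) → (∀ n, Mle (g n) G) →
      Mle 0 L → Mle L G → Filter.Tendsto g atTop (nhds L) →
      Filter.Tendsto (fun n => f (g n)) atTop (nhds (f L)))
    (hP0 : P 0) (hPf : ∀ X, Mle 0 X → Mle X G → P X → P (f X))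
    (hPlim : ∀ (g : ℕ → M) (L : M), (∀ n, P (g n)) → Filter.Tendsto g atTop (nhds L) → P L) :
    ∃ L, Mle 0 L ∧ Mle L G ∧ f L = L ∧ P L := by
  classical
  -- the iteration
  let g : ℕ → M := fun n => Nat.rec (0 : M) (fun _ Z => f Z) n
  have hg0 : g 0 = 0 := rfl
  have hgs : ∀ n, g (n + 1) = f (g n) := fun n => rfl
  have hbnd : ∀ n, Mle 0 (g n) ∧ Mle (g n) G := by
    intro n
    induction n with
    | zero => exact ⟨fun i j => le_refl _, hG0⟩
    | succ k ih =>
      show Mle 0 (f (g k)) ∧ Mle (f (g k)) G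
      refine ⟨h0 _ ih.1 ih.2, ?_⟩
      exact Mle.trans (hmono _ _ ih.1 ih.2 (fun i j => le_refl _)) hfG
  have hmonog : ∀ n, Mle (g n) (g (n + 1)) := by
    intro n
    induction n with
    | zero =>
      show Mle (0 : M) (f 0)
      exact h0 _ (fun i j => le_refl _) hG0
    | succ k ih =>
      show Mle (f (g k)) (f (g (k+1)))
      exact hmono _ _ (hbnd k).1 ih (hbnd (k+1)).2
  have hmono' : ∀ i j, Monotone fun n => g n i j := by
    intro i j
    exact monotone_nat_of_le_succ fun n => hmonog n i j
  -- the limit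
  let L : M := fun i j => ⨆ n, g n i j
  have hbdd : ∀ i j, BddAbove (Set.range fun n => g n i j) := by
    intro i j
    exact ⟨G i j, fun x ⟨n, hn⟩ => hn ▸ (hbnd n).2 i j⟩
  have htend_entry : ∀ i j, Filter.Tendsto (fun n => g n i j) atTop (nhds (L i j)) :=
    fun i j => tendsto_atTop_ciSup (hmono' i j) (hbdd i j)
  have htend : Filter.Tendsto g atTop (nhds L) := by
    apply tendsto_pi_nhds.mpr
    intro i
    rw [tendsto_pi_nhds]
    intro j
    exact htend_entry i j
  have hL0 : Mle 0 L := mle_of_tendsto' htend fun n => (hbnd n).1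
  have hLG : Mle L G := mle_of_tendsto htend fun n => (hbnd n).2
  have hfix : f L = L := by
    have h1 : Filter.Tendsto (fun n => f (g n)) atTop (nhds (f L)) :=
      hcont g L (fun n => (hbnd n).1) (fun n => (hbnd n).2) hL0 hLG htend
    have h2 : Filter.Tendsto (fun n => g (n + 1)) atTop (nhds L) :=
      htend.comp (tendsto_add_atTop_nat 1)
    have h3 : Filter.Tendsto (fun n => f (g n)) atTop (nhds L) := by
      simpa only [hgs] using h2
    exact tendsto_nhds_unique h1 h3
  have hPg : ∀ n, P (g n) := by
    intro n
    induction n with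
    | zero => exact hP0
    | succ k ih =>
      show P (f (g k))
      exact hPf _ (hbnd k).1 (hbnd k).2 ih
  exact ⟨L, hL0, hLG, hfix, hPlim g L hPg htend⟩


def RowSub {m : ℕ} (X : Matrix (Fin m) (Fin m) ℝ) : Prop := ∀ k, ∑ j, X k j ≤ 1

lemma rowsum_mul_le {m : ℕ} {A X : Matrix (Fin m) (Fin m) ℝ} (hA : Mle 0 A) (hX : Mle 0 X)
    (hXs : RowSub X) (k : Fin m) : ∑ j, (A * X) k j ≤ ∑ j, A k j := by
  simp only [Matrix.mul_apply]
  rw [Finset.sum_comm]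
  calc ∑ s, ∑ j, A k s * X s j = ∑ s, A k s * ∑ j, X s j := by
        simp [Finset.mul_sum]
    _ ≤ ∑ s, A k s * 1 := by
        refine Finset.sum_le_sum fun s _ => ?_
        exact mul_le_mul_of_nonneg_left (hXs s) (by simpa using hA k s)
    _ = ∑ s, A k s := by simp

lemma rowsub_pow {m : ℕ} {X : Matrix (Fin m) (Fin m) ℝ} (hX : Mle 0 X) (hXs : RowSub X) (n : ℕ) :
    RowSub (X ^ n) := by
  induction n with
  | zero =>
    intro k
    simp [pow_zero, Matrix.one_apply]
  | succ n ih =>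
    intro k
    rw [pow_succ]
    exact le_trans (rowsum_mul_le (mle_pow_nonneg hX n) hX hXs k) (ih k)

/-- `G` is row-substochastic. -/
lemma G_rowsub {m : ℕ} (A : ℕ → Matrix (Fin m) (Fin m) ℝ) (G : Matrix (Fin m) (Fin m) ℝ)
    (hA0 : ∀ i, Mle 0 (A i)) (hsum : Summable A)
    (hrow : ∀ k, ∑ j, (∑' i, A i) k j ≤ 1) (hG : IsMinSol A G) : RowSub G := by
  obtain ⟨hG0, hGsum, hGeq, hGmin⟩ := hG
  set f : Matrix (Fin m) (Fin m) ℝ → Matrix (Fin m) (Fin m) ℝ :=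
    fun X => ∑' i, A i * X ^ i with hf
  -- basic facts for X in [0,G]
  have hterm0 : ∀ (X : Matrix (Fin m) (Fin m) ℝ), Mle 0 X →
      ∀ i, Mle 0 (A i * X ^ i) := fun X hX i => mle_mul_nonneg (hA0 i) (mle_pow_nonneg hX i)
  have htermle : ∀ (X : Matrix (Fin m) (Fin m) ℝ), Mle 0 X → Mle X G →
      ∀ i, Mle (A i * X ^ i) (A i * G ^ i) := fun X hX hXG i =>
    mle_mul (hA0 i) (fun a b => le_refl _) (mle_pow_nonneg hX i) (mle_pow hX hXG i)
  have hsummX : ∀ (X : Matrix (Fin m) (Fin m) ℝ), Mle 0 X → Mle X G →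
      Summable (fun i => A i * X ^ i) := fun X hX hXG =>
    summable_of_mle (hterm0 X hX) (htermle X hX hXG) hGsum
  have hmono : ∀ X Y, Mle 0 X → Mle X Y → Mle Y G → Mle (f X) (f Y) := by
    intro X Y hX hXY hYG
    have hY : Mle 0 Y := Mle.trans hX hXY
    exact mle_tsum (fun i => mle_mul (hA0 i) (fun a b => le_refl _) (mle_pow_nonneg hX i)
      (mle_pow hX hXY i)) (hsummX X hX (Mle.trans hXY hYG)) (hsummX Y hY hYG)
  have h0 : ∀ X, Mle 0 X → Mle X G → Mle 0 (f X) := fun X hX hXG =>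
    mle_tsum_nonneg (hterm0 X hX) (hsummX X hX hXG)
  have hfG : Mle (f G) G := by
    intro i j
    have : f G = G := hGeq.symm
    rw [this]
  have hcont : ∀ (g : ℕ → Matrix (Fin m) (Fin m) ℝ) (L : Matrix (Fin m) (Fin m) ℝ),
      (∀ n, Mle 0 (g n)) → (∀ n, Mle (g n) G) → Mle 0 L → Mle L G →
      Filter.Tendsto g atTop (nhds L) → Filter.Tendsto (fun n => f (g n)) atTop (nhds (f L)) := by
    intro g L hg0 hgG hL0 hLG htd
    apply tendsto_pi_nhds.mpr
    intro k
    rw [tendsto_pi_nhds]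
    intro j
    have he : ∀ (X : Matrix (Fin m) (Fin m) ℝ), Mle 0 X → Mle X G →
        f X k j = ∑' i, (A i * X ^ i) k j := fun X hX hXG => tsum_entry (hsummX X hX hXG) k j
    have hgoal : Filter.Tendsto (fun n => ∑' i, (A i * (g n) ^ i) k j) atTop
        (nhds (∑' i, (A i * L ^ i) k j)) := by
      apply tendsto_tsum_of_dominated_convergence (bound := fun i => (A i * G ^ i) k j)
        (summable_matrix_iff'.mp hGsum k j)
      · intro i
        have hc : Continuous fun X : Matrix (Fin m) (Fin m) ℝ => (A i * X ^ i) k j :=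
          (continuous_apply j).comp ((continuous_apply k).comp
            (continuous_const.mul (continuous_pow i)))
        exact (hc.tendsto L).comp htd
      · refine Filter.Eventually.of_forall fun n => fun i => ?_
        have h1 : (0:ℝ) ≤ (A i * (g n) ^ i) k j := by simpa using hterm0 (g n) (hg0 n) i k j
        rw [Real.norm_of_nonneg h1]
        exact htermle (g n) (hg0 n) (hgG n) i k j
    refine Filter.Tendsto.congr (fun n => (he (g n) (hg0 n) (hgG n)).symm) ?_
    rw [he L hL0 hLG]
    exact hgoal
  have hPf : ∀ X, Mle 0 X → Mle X G → RowSub X → RowSub (f X) := by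
    intro X hX hXG hXs k
    have hsX := hsummX X hX hXG
    have hsent : ∀ j, Summable (fun i => (A i * X ^ i) k j) :=
      fun j => summable_matrix_iff'.mp hsX k j
    calc ∑ j, f X k j = ∑ j, ∑' i, (A i * X ^ i) k j := by
          refine Finset.sum_congr rfl fun j _ => ?_
          rw [hf]
          exact tsum_entry hsX k j
      _ = ∑' i, ∑ j, (A i * X ^ i) k j := (Summable.tsum_finsetSum fun j _ => hsent j).symm
      _ ≤ ∑' i, ∑ j, A i k j := by
          refine Summable.tsum_le_tsum (fun i => rowsum_mul_le (hA0 i) (mle_pow_nonneg hX i)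
              (rowsub_pow hX hXs i) k) ?_ ?_
          · exact summable_sum fun j _ => hsent j
          · exact summable_sum fun j _ => summable_matrix_iff'.mp hsum k j
      _ = ∑ j, ∑' i, A i k j := Summable.tsum_finsetSum fun j _ => summable_matrix_iff'.mp hsum k j
      _ = ∑ j, (∑' i, A i) k j := by
          refine Finset.sum_congr rfl fun j _ => (tsum_entry hsum k j).symm
      _ ≤ 1 := hrow k
  have hPlim : ∀ (g : ℕ → Matrix (Fin m) (Fin m) ℝ) (L : Matrix (Fin m) (Fin m) ℝ),
      (∀ n, RowSub (g n)) → Filter.Tendsto g atTop (nhds L) → RowSub L := by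
    intro g L hgs htd k
    have h1 : Filter.Tendsto (fun n => ∑ j, g n k j) atTop (nhds (∑ j, L k j)) := by
      refine tendsto_finset_sum _ fun j _ => ?_
      exact tendsto_pi_nhds.mp (tendsto_pi_nhds.mp htd k) j
    exact le_of_tendsto h1 (Filter.Eventually.of_forall fun n => hgs n k)
  obtain ⟨L, hL0, hLG, hfix, hLs⟩ := exists_fixed G f RowSub hmono h0 hfG hG0 hcont
    (by intro k; simp) hPf hPlim
  have hGL : Mle G L := hGmin L hL0 (hsummX L hL0 hLG) hfix.symm
  intro k
  calc ∑ j, G k j ≤ ∑ j, L k j := Finset.sum_le_sum fun j _ => hGL k j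
    _ ≤ 1 := hLs k

/-- Rearrangement: the power series equation for `G` in grouped form. -/
lemma Geq_grouped {m p : ℕ} (A : ℕ → Matrix (Fin m) (Fin m) ℝ)
    (Aℓ : ℕ → ℕ → Matrix (Fin m) (Fin m) ℝ)
    (hcompat : ∀ i, A i = ∑ ℓ ∈ Finset.range (p + 1),
      if ℓ ≤ i then Aℓ ℓ (i - ℓ) else 0)
    (G : Matrix (Fin m) (Fin m) ℝ)
    (hGeq : G = ∑' i, A i * G ^ i)
    (hsGG : ∀ ℓ, Summable (fun i => Aℓ ℓ i * G ^ i)) :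
    G = ∑ ℓ ∈ Finset.range (p + 1), (∑' i, Aℓ ℓ i * G ^ i) * G ^ ℓ := by
  classical
  have hsf : ∀ ℓ, Summable (fun i => (if ℓ ≤ i then Aℓ ℓ (i - ℓ) else 0) * G ^ i) := by
    intro ℓ
    have hinj : Function.Injective (fun j : ℕ => j + ℓ) := add_left_injective ℓ
    have hvan : ∀ i ∉ Set.range (fun j : ℕ => j + ℓ),
        (if ℓ ≤ i then Aℓ ℓ (i - ℓ) else 0) * G ^ i = 0 := by
      intro i hi
      have h1 : ¬ ℓ ≤ i := fun h => hi ⟨i - ℓ, Nat.sub_add_cancel h⟩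
      simp [h1]
    rw [← hinj.summable_iff hvan]
    have : ((fun i => (if ℓ ≤ i then Aℓ ℓ (i - ℓ) else 0) * G ^ i) ∘ (fun j : ℕ => j + ℓ))
        = fun j => (Aℓ ℓ j * G ^ j) * G ^ ℓ := by
      funext j
      simp [Nat.le_add_left, pow_add, mul_assoc]
    rw [this]
    exact (hsGG ℓ).mul_right _
  have hkey : ∀ ℓ, (∑' i, (if ℓ ≤ i then Aℓ ℓ (i - ℓ) else 0) * G ^ i)
      = (∑' i, Aℓ ℓ i * G ^ i) * G ^ ℓ := by
    intro ℓ
    have hinj : Function.Injective (fun j : ℕ => j + ℓ) := add_left_injective ℓ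
    have hsupp : Function.support (fun i => (if ℓ ≤ i then Aℓ ℓ (i - ℓ) else 0) * G ^ i)
        ⊆ Set.range (fun j : ℕ => j + ℓ) := by
      intro i hi
      by_contra hc
      have h1 : ¬ ℓ ≤ i := fun h => hc ⟨i - ℓ, Nat.sub_add_cancel h⟩
      apply hi
      simp [h1]
    have h2 := hinj.tsum_eq (f := fun i => (if ℓ ≤ i then Aℓ ℓ (i - ℓ) else 0) * G ^ i) hsupp
    rw [← h2]
    have h3 : (fun j : ℕ => (if ℓ ≤ j + ℓ then Aℓ ℓ (j + ℓ - ℓ) else 0) * G ^ (j + ℓ))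
        = fun j => (Aℓ ℓ j * G ^ j) * G ^ ℓ := by
      funext j
      simp [Nat.le_add_left, pow_add, mul_assoc]
    calc ∑' j : ℕ, (if ℓ ≤ j + ℓ then Aℓ ℓ (j + ℓ - ℓ) else 0) * G ^ (j + ℓ)
        = ∑' j : ℕ, (Aℓ ℓ j * G ^ j) * G ^ ℓ := by rw [h3]
      _ = (∑' i, Aℓ ℓ i * G ^ i) * G ^ ℓ := Summable.tsum_mul_right _ (hsGG ℓ)
  calc G = ∑' i, A i * G ^ i := hGeq
    _ = ∑' i, ∑ ℓ ∈ Finset.range (p + 1), (if ℓ ≤ i then Aℓ ℓ (i - ℓ) else 0) * G ^ i := by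
        refine tsum_congr fun i => ?_
        rw [hcompat i, Finset.sum_mul]
    _ = ∑ ℓ ∈ Finset.range (p + 1), ∑' i, (if ℓ ≤ i then Aℓ ℓ (i - ℓ) else 0) * G ^ i := by
        refine Summable.tsum_finsetSum fun ℓ _ => hsf ℓ
    _ = ∑ ℓ ∈ Finset.range (p + 1), (∑' i, Aℓ ℓ i * G ^ i) * G ^ ℓ :=
        Finset.sum_congr rfl fun ℓ _ => hkey ℓ

lemma mle_sub_nonneg {m : ℕ} {X Y : Matrix (Fin m) (Fin m) ℝ} (h : Mle X Y) :
    Mle 0 (Y - X) := by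
  intro i j
  have := h i j
  simp only [Matrix.sub_apply, Matrix.zero_apply]
  linarith

lemma rowsub_of_mle {m : ℕ} {X G : Matrix (Fin m) (Fin m) ℝ} (h0 : Mle 0 X) (h : Mle X G)
    (hG : RowSub G) : RowSub X := fun k =>
  le_trans (Finset.sum_le_sum fun j _ => h k j) (hG k)

lemma mulVec_one_le {m : ℕ} {X : Matrix (Fin m) (Fin m) ℝ} (hX : RowSub X) :
    X *ᵥ (1 : Fin m → ℝ) ≤ 1 := by
  intro k
  rw [mulVec_entry]
  simpa using hX k

lemma one_vec_nonneg {m : ℕ} : (0 : Fin m → ℝ) ≤ 1 := fun _ => zero_le_one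

/-- Telescoping bound: `(Gⁿ - Yⁿ)·1 ≤ (∑_{j<n} Gʲ)·((G-Y)·1)`. -/
lemma pow_diff_mulVec {m : ℕ} {G Y : Matrix (Fin m) (Fin m) ℝ} (hY0 : Mle 0 Y) (hYG : Mle Y G)
    (hG0 : Mle 0 G) (hGrs : RowSub G) (n : ℕ) :
    (G ^ n - Y ^ n) *ᵥ (1 : Fin m → ℝ) ≤
      (∑ j ∈ Finset.range n, G ^ j) *ᵥ ((G - Y) *ᵥ (1 : Fin m → ℝ)) := by
  have hYrs : RowSub Y := rowsub_of_mle hY0 hYG hGrs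
  have hGY0 : Mle 0 (G - Y) := mle_sub_nonneg hYG
  have hD0 : (0 : Fin m → ℝ) ≤ (G - Y) *ᵥ 1 := mulVec_nonneg hGY0 one_vec_nonneg
  induction n with
  | zero => simp [pow_zero]
  | succ n ih =>
    have hid : G ^ (n+1) - Y ^ (n+1) = G * (G ^ n - Y ^ n) + (G - Y) * Y ^ n := by
      rw [mul_sub, sub_mul, pow_succ', pow_succ']
      abel
    rw [hid, Matrix.add_mulVec, ← Matrix.mulVec_mulVec, ← Matrix.mulVec_mulVec]
    have h1 : G *ᵥ ((G ^ n - Y ^ n) *ᵥ 1) ≤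
        G *ᵥ ((∑ j ∈ Finset.range n, G ^ j) *ᵥ ((G - Y) *ᵥ 1)) :=
      mulVec_mono_vec hG0 ih
    have h2 : (G - Y) *ᵥ (Y ^ n *ᵥ 1) ≤ (G - Y) *ᵥ 1 :=
      mulVec_mono_vec hGY0 (mulVec_one_le (rowsub_pow hY0 hYrs n))
    have h3 : G *ᵥ ((∑ j ∈ Finset.range n, G ^ j) *ᵥ ((G - Y) *ᵥ 1)) + (G - Y) *ᵥ 1 =
        (∑ j ∈ Finset.range (n+1), G ^ j) *ᵥ ((G - Y) *ᵥ 1) := by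
      rw [Matrix.mulVec_mulVec, geom_sum_succ, Matrix.add_mulVec, Matrix.one_mulVec]
    intro v
    calc (G *ᵥ ((G ^ n - Y ^ n) *ᵥ 1)) v + ((G - Y) *ᵥ (Y ^ n *ᵥ 1)) v
        ≤ (G *ᵥ ((∑ j ∈ Finset.range n, G ^ j) *ᵥ ((G - Y) *ᵥ 1))) v + ((G - Y) *ᵥ 1) v :=
          add_le_add (h1 v) (h2 v)
      _ = ((∑ j ∈ Finset.range (n+1), G ^ j) *ᵥ ((G - Y) *ᵥ 1)) v := by rw [← h3]; rfl

lemma Xk_mem {m p : ℕ} (Aℓ : ℕ → ℕ → Matrix (Fin m) (Fin m) ℝ)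
    (hAℓ0 : ∀ ℓ i, Mle 0 (Aℓ ℓ i))
    (G : Matrix (Fin m) (Fin m) ℝ) (hG0 : Mle 0 G)
    (hGgrp : G = ∑ ℓ ∈ Finset.range (p + 1), (∑' i, Aℓ ℓ i * G ^ i) * G ^ ℓ)
    (hsG : ∀ ℓ (X : Matrix (Fin m) (Fin m) ℝ), Mle 0 X → Mle X G →
      Summable (fun i => Aℓ ℓ i * X ^ i))
    (X : ℕ → Matrix (Fin m) (Fin m) ℝ)
    (hX0 : X 0 = 0)
    (hXk : ∀ k, IsMinPolySol p (fun ℓ => ∑' i, Aℓ ℓ i * (X k) ^ i) (X (k + 1))) :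
    ∀ k, Mle 0 (X k) ∧ Mle (X k) G := by
  intro k
  induction k with
  | zero => rw [hX0]; exact ⟨fun i j => le_refl _, hG0⟩
  | succ k ih =>
    obtain ⟨hW0, hWG⟩ := ih
    set W := X k
    set C : ℕ → Matrix (Fin m) (Fin m) ℝ := fun ℓ => ∑' i, Aℓ ℓ i * W ^ i with hC
    have hC0 : ∀ ℓ, Mle 0 (C ℓ) :=
      fun ℓ => mle_tsum_nonneg (fun i => mle_mul_nonneg (hAℓ0 ℓ i) (mle_pow_nonneg hW0 i))
        (hsG ℓ W hW0 hWG)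
    have hCB : ∀ ℓ, Mle (C ℓ) (∑' i, Aℓ ℓ i * G ^ i) := fun ℓ =>
      mle_tsum (fun i => mle_mul (hAℓ0 ℓ i) (fun a b => le_refl _) (mle_pow_nonneg hW0 i)
        (mle_pow hW0 hWG i)) (hsG ℓ W hW0 hWG) (hsG ℓ G hG0 (fun a b => le_refl _))
    set f : Matrix (Fin m) (Fin m) ℝ → Matrix (Fin m) (Fin m) ℝ :=
      fun Z => ∑ ℓ ∈ Finset.range (p + 1), C ℓ * Z ^ ℓ with hf
    have hmono : ∀ Z Y, Mle 0 Z → Mle Z Y → Mle Y G → Mle (f Z) (f Y) := by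
      intro Z Y hZ hZY _
      exact mle_sum fun ℓ _ => mle_mul (hC0 ℓ) (fun a b => le_refl _) (mle_pow_nonneg hZ ℓ)
        (mle_pow hZ hZY ℓ)
    have h0 : ∀ Z, Mle 0 Z → Mle Z G → Mle 0 (f Z) := fun Z hZ _ =>
      mle_sum_nonneg fun ℓ _ => mle_mul_nonneg (hC0 ℓ) (mle_pow_nonneg hZ ℓ)
    have hfG : Mle (f G) G := by
      have h1 : Mle (f G) (∑ ℓ ∈ Finset.range (p + 1), (∑' i, Aℓ ℓ i * G ^ i) * G ^ ℓ) :=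
        mle_sum fun ℓ _ => mle_mul (hC0 ℓ) (hCB ℓ) (mle_pow_nonneg hG0 ℓ)
          (fun a b => le_refl _)
      rw [← hGgrp] at h1
      exact h1
    have hcont : ∀ (g : ℕ → Matrix (Fin m) (Fin m) ℝ) (L : Matrix (Fin m) (Fin m) ℝ),
        (∀ n, Mle 0 (g n)) → (∀ n, Mle (g n) G) → Mle 0 L → Mle L G →
        Filter.Tendsto g atTop (nhds L) →
        Filter.Tendsto (fun n => f (g n)) atTop (nhds (f L)) := by
      intro g L _ _ _ _ htd
      have hc : Continuous f := by
        rw [hf]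
        exact continuous_finset_sum _ fun ℓ _ => continuous_const.mul (continuous_pow ℓ)
      exact (hc.tendsto L).comp htd
    obtain ⟨L, hL0, hLG, hfix, -⟩ := exists_fixed G f (fun _ => True) hmono h0 hfG hG0 hcont
      trivial (fun _ _ _ _ => trivial) (fun _ _ _ _ => trivial)
    have hXL : Mle (X (k + 1)) L := (hXk k).2.2 L hL0 hfix.symm
    exact ⟨(hXk k).1, Mle.trans hXL hLG⟩

/-- The middle estimate: `(A(G) - A(W))·1 ≤ N_ℓ·((G-W)·1)`. -/
lemma middle_bound {m : ℕ} (Ai : ℕ → Matrix (Fin m) (Fin m) ℝ)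
    (hA0 : ∀ i, Mle 0 (Ai i)) {G W : Matrix (Fin m) (Fin m) ℝ}
    (hW0 : Mle 0 W) (hWG : Mle W G) (hG0 : Mle 0 G) (hGrs : RowSub G)
    (hsW : Summable fun i => Ai i * W ^ i)
    (hsGs : Summable fun i => Ai i * G ^ i)
    (hsN : Summable fun i => Ai (i + 1) * ∑ j ∈ Finset.range (i + 1), G ^ j) :
    ((∑' i, Ai i * G ^ i) - ∑' i, Ai i * W ^ i) *ᵥ (1 : Fin m → ℝ) ≤
      (∑' i, Ai (i + 1) * ∑ j ∈ Finset.range (i + 1), G ^ j) *ᵥ ((G - W) *ᵥ 1) := by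
  intro v
  set D : Fin m → ℝ := (G - W) *ᵥ 1 with hD
  set h : ℕ → ℝ := fun i => ((Ai i * ∑ j ∈ Finset.range i, G ^ j) *ᵥ D) v with hh
  have hsh1 : Summable (fun i => h (i + 1)) := summable_mulVec_entry hsN D v
  have hsh : Summable h := (summable_nat_add_iff 1).mp hsh1
  have hle : ∀ i, ((Ai i * G ^ i) *ᵥ 1) v - ((Ai i * W ^ i) *ᵥ 1) v ≤ h i := by
    intro i
    have e1 : ((Ai i * G ^ i) *ᵥ 1) v - ((Ai i * W ^ i) *ᵥ 1) v
        = ((Ai i * G ^ i - Ai i * W ^ i) *ᵥ (1 : Fin m → ℝ)) v := by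
      rw [Matrix.sub_mulVec]; rfl
    rw [e1, ← mul_sub, ← Matrix.mulVec_mulVec]
    have e2 := mulVec_mono_vec (hA0 i) (pow_diff_mulVec hW0 hWG hG0 hGrs i)
    calc (Ai i *ᵥ ((G ^ i - W ^ i) *ᵥ 1)) v
        ≤ (Ai i *ᵥ ((∑ j ∈ Finset.range i, G ^ j) *ᵥ ((G - W) *ᵥ 1))) v := e2 v
      _ = h i := by rw [Matrix.mulVec_mulVec]
  calc (((∑' i, Ai i * G ^ i) - ∑' i, Ai i * W ^ i) *ᵥ (1 : Fin m → ℝ)) v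
      = ((∑' i, Ai i * G ^ i) *ᵥ (1 : Fin m → ℝ)) v
        - ((∑' i, Ai i * W ^ i) *ᵥ (1 : Fin m → ℝ)) v := by rw [Matrix.sub_mulVec]; rfl
    _ = (∑' i, ((Ai i * G ^ i) *ᵥ (1 : Fin m → ℝ)) v) - ∑' i, ((Ai i * W ^ i) *ᵥ (1 : Fin m → ℝ)) v := by
        rw [tsum_mulVec hsGs, tsum_mulVec hsW]
    _ = ∑' i, (((Ai i * G ^ i) *ᵥ (1 : Fin m → ℝ)) v - ((Ai i * W ^ i) *ᵥ (1 : Fin m → ℝ)) v) :=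
        (Summable.tsum_sub (summable_mulVec_entry hsGs 1 v) (summable_mulVec_entry hsW 1 v)).symm
    _ ≤ ∑' i, h i := Summable.tsum_le_tsum hle
        ((summable_mulVec_entry hsGs 1 v).sub (summable_mulVec_entry hsW 1 v)) hsh
    _ = h 0 + ∑' i, h (i + 1) := Summable.tsum_eq_zero_add hsh
    _ = ∑' i, h (i + 1) := by
        have : h 0 = 0 := by simp [hh, Matrix.zero_mulVec]
        rw [this, zero_add]
    _ = ((∑' i, Ai (i + 1) * ∑ j ∈ Finset.range (i + 1), G ^ j) *ᵥ D) v :=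
        (tsum_mulVec hsN D v).symm

/-- Theorem 3.4 of the paper: `M ε_{k+1} ≤ N ε_k`.  Here `A i` denotes
`A_{i-1}`, `p = q+1 ≥ 0`, `Aℓ ℓ' i` denotes `A_{ℓ'-1, i}`, and `1` is the all-ones
vector. -/
theorem stmt4 (m : ℕ) (hm : 1 ≤ m) (p : ℕ)
    (A : ℕ → Matrix (Fin m) (Fin m) ℝ)
    (Aℓ : ℕ → ℕ → Matrix (Fin m) (Fin m) ℝ)
    (hA0 : ∀ i, Mle 0 (A i)) (hAℓ0 : ∀ ℓ i, Mle 0 (Aℓ ℓ i))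
    (hsum : Summable A)
    (hrow : ∀ k, ∑ j, (∑' i, A i) k j ≤ 1)
    (hcompat : ∀ i, A i = ∑ ℓ ∈ Finset.range (p + 1),
      if ℓ ≤ i then Aℓ ℓ (i - ℓ) else 0)
    (G : Matrix (Fin m) (Fin m) ℝ) (hG : IsMinSol A G)
    -- all series occurring converge entrywise:
    (hsG : ∀ ℓ (X : Matrix (Fin m) (Fin m) ℝ), Mle 0 X → Mle X G →
      Summable (fun i => Aℓ ℓ i * X ^ i))
    (hsN : ∀ ℓ, Summable (fun i => Aℓ ℓ (i + 1) * ∑ j ∈ Finset.range (i + 1), G ^ j))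
    (X : ℕ → Matrix (Fin m) (Fin m) ℝ)
    (hX0 : X 0 = 0)
    (hXk : ∀ k, IsMinPolySol p (fun ℓ => ∑' i, Aℓ ℓ i * (X k) ^ i) (X (k + 1))) :
    ∀ k,
      ((1 : Matrix (Fin m) (Fin m) ℝ) -
          ∑ ℓ ∈ Finset.range (p + 1),
            (∑' i, Aℓ ℓ i * G ^ i) * ∑ j ∈ Finset.range ℓ, G ^ j) *ᵥ
          ((G - X (k + 1)) *ᵥ 1) ≤
        (∑ ℓ ∈ Finset.range (p + 1),
            ∑' i, Aℓ ℓ (i + 1) * ∑ j ∈ Finset.range (i + 1), G ^ j) *ᵥ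
          ((G - X k) *ᵥ 1) := by
  intro k
  obtain ⟨hG0, hGsum, hGeq, hGmin⟩ := hG
  have hGrs : RowSub G := G_rowsub A G hA0 hsum hrow ⟨hG0, hGsum, hGeq, hGmin⟩
  have hGgrp : G = ∑ ℓ ∈ Finset.range (p + 1), (∑' i, Aℓ ℓ i * G ^ i) * G ^ ℓ :=
    Geq_grouped A Aℓ hcompat G hGeq (fun ℓ => hsG ℓ G hG0 (fun a b => le_refl _))
  have hmem := Xk_mem Aℓ hAℓ0 G hG0 hGgrp hsG X hX0 hXk
  obtain ⟨hW0, hWG⟩ := hmem k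
  obtain ⟨hY0, hYG⟩ := hmem (k + 1)
  set W := X k with hW
  set Y := X (k + 1) with hY
  have hYrs : RowSub Y := rowsub_of_mle hY0 hYG hGrs
  set B : ℕ → Matrix (Fin m) (Fin m) ℝ := fun ℓ => ∑' i, Aℓ ℓ i * G ^ i with hB
  set C : ℕ → Matrix (Fin m) (Fin m) ℝ := fun ℓ => ∑' i, Aℓ ℓ i * W ^ i with hC
  set Nl : ℕ → Matrix (Fin m) (Fin m) ℝ :=
    fun ℓ => ∑' i, Aℓ ℓ (i + 1) * ∑ j ∈ Finset.range (i + 1), G ^ j with hNl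
  set E : Fin m → ℝ := (G - Y) *ᵥ 1 with hE
  set D : Fin m → ℝ := (G - W) *ᵥ 1 with hD
  have hB0 : ∀ ℓ, Mle 0 (B ℓ) := fun ℓ =>
    mle_tsum_nonneg (fun i => mle_mul_nonneg (hAℓ0 ℓ i) (mle_pow_nonneg hG0 i))
      (hsG ℓ G hG0 (fun a b => le_refl _))
  have hCB : ∀ ℓ, Mle (C ℓ) (B ℓ) := fun ℓ =>
    mle_tsum (fun i => mle_mul (hAℓ0 ℓ i) (fun a b => le_refl _) (mle_pow_nonneg hW0 i)
      (mle_pow hW0 hWG i)) (hsG ℓ W hW0 hWG) (hsG ℓ G hG0 (fun a b => le_refl _))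
  -- matrix identity
  have hidm : G - Y = (∑ ℓ ∈ Finset.range (p + 1), B ℓ * (G ^ ℓ - Y ^ ℓ)) +
      ∑ ℓ ∈ Finset.range (p + 1), (B ℓ - C ℓ) * Y ^ ℓ := by
    have e2 : Y = ∑ ℓ ∈ Finset.range (p + 1), C ℓ * Y ^ ℓ := (hXk k).2.1
    calc G - Y = (∑ ℓ ∈ Finset.range (p + 1), B ℓ * G ^ ℓ) -
          ∑ ℓ ∈ Finset.range (p + 1), C ℓ * Y ^ ℓ := by rw [← hGgrp, ← e2]
      _ = ∑ ℓ ∈ Finset.range (p + 1), (B ℓ * G ^ ℓ - C ℓ * Y ^ ℓ) :=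
          (Finset.sum_sub_distrib _ _).symm
      _ = ∑ ℓ ∈ Finset.range (p + 1), (B ℓ * (G ^ ℓ - Y ^ ℓ) + (B ℓ - C ℓ) * Y ^ ℓ) := by
          refine Finset.sum_congr rfl fun ℓ _ => ?_
          rw [mul_sub, sub_mul]
          abel
      _ = _ := Finset.sum_add_distrib
  -- vector bounds
  have bound1 : ∀ ℓ, (B ℓ * (G ^ ℓ - Y ^ ℓ)) *ᵥ (1 : Fin m → ℝ) ≤
      (B ℓ * ∑ j ∈ Finset.range ℓ, G ^ j) *ᵥ E := by
    intro ℓ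
    rw [← Matrix.mulVec_mulVec, ← Matrix.mulVec_mulVec]
    exact mulVec_mono_vec (hB0 ℓ) (pow_diff_mulVec hY0 hYG hG0 hGrs ℓ)
  have bound2 : ∀ ℓ, ((B ℓ - C ℓ) * Y ^ ℓ) *ᵥ (1 : Fin m → ℝ) ≤ Nl ℓ *ᵥ D := by
    intro ℓ
    have h1 : ((B ℓ - C ℓ) * Y ^ ℓ) *ᵥ (1 : Fin m → ℝ) ≤ (B ℓ - C ℓ) *ᵥ (1 : Fin m → ℝ) := by
      rw [← Matrix.mulVec_mulVec]
      exact mulVec_mono_vec (mle_sub_nonneg (hCB ℓ)) (mulVec_one_le (rowsub_pow hY0 hYrs ℓ))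
    refine le_trans h1 ?_
    exact middle_bound (Aℓ ℓ) (hAℓ0 ℓ) hW0 hWG hG0 hGrs (hsG ℓ W hW0 hWG)
      (hsG ℓ G hG0 (fun a b => le_refl _)) (hsN ℓ)
  -- assemble
  intro v
  rw [Matrix.sub_mulVec, Matrix.one_mulVec]
  have key : E v ≤ ((∑ ℓ ∈ Finset.range (p + 1), B ℓ * ∑ j ∈ Finset.range ℓ, G ^ j) *ᵥ E) v +
      ((∑ ℓ ∈ Finset.range (p + 1), Nl ℓ) *ᵥ D) v := by
    have e3 : E v = ∑ ℓ ∈ Finset.range (p + 1), ((B ℓ * (G ^ ℓ - Y ^ ℓ)) *ᵥ (1 : Fin m → ℝ)) v +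
        ∑ ℓ ∈ Finset.range (p + 1), (((B ℓ - C ℓ) * Y ^ ℓ) *ᵥ (1 : Fin m → ℝ)) v := by
      rw [hE, hidm, Matrix.add_mulVec, _root_.sum_mulVec, _root_.sum_mulVec]
      simp [Finset.sum_apply]
    rw [e3, _root_.sum_mulVec, _root_.sum_mulVec]
    refine add_le_add ?_ ?_
    · rw [Finset.sum_apply]
      exact Finset.sum_le_sum fun ℓ _ => bound1 ℓ v
    · rw [Finset.sum_apply]
      exact Finset.sum_le_sum fun ℓ _ => bound2 ℓ v
  have : (E - (∑ ℓ ∈ Finset.range (p + 1), B ℓ * ∑ j ∈ Finset.range ℓ, G ^ j) *ᵥ E) v ≤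
      ((∑ ℓ ∈ Finset.range (p + 1), Nl ℓ) *ᵥ D) v := by
    have := key
    simp only [Pi.sub_apply]
    linarith
  exact this
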